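/- Let A = {p_1, …, p_n} be a simplex with diameter D, ‖p_1 − p_2‖ = D, and let 𝓑 be the family of subsets B ⊆ [n] with |B| ≥ 2 and {1,2} ⊄ B. Suppose there are nonnegative reals α_B (B ∈ 𝓑) such that D² − ‖p_i − p_j‖² = Σ_{B ∈ 𝓑, {i,j} ⊆ B} α_B for all 1 ≤ i < j ≤ n, and Σ_{B ∈ 𝓑} α_B ≤ D². Then A is diameter-Ramsey. -/

import Mathlib

open Finset

namespace Stmt4Aux

lemma pairsum {P : Type*} [Fintype P] [DecidableEq P] {c : ℝ} (hc : 0 ≤ c) (a b : P) :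
    ∑ pos : P, ((if pos = a then Real.sqrt (c/2) else 0)
      - (if pos = b then Real.sqrt (c/2) else 0))^2 = if a = b then 0 else c := by
  rcases eq_or_ne a b with rfl | hab
  · simp
  · rw [if_neg hab]
    have h2 : (Real.sqrt (c/2))^2 = c/2 := Real.sq_sqrt (by linarith)
    have key : ∀ pos : P, ((if pos = a then Real.sqrt (c/2) else 0)
        - (if pos = b then Real.sqrt (c/2) else 0))^2
        = (if pos = a then c/2 else 0) + (if pos = b then c/2 else 0) := by
      intro pos
      rcases eq_or_ne pos a with rfl | hpa
      · rw [if_pos rfl, if_pos rfl, if_neg hab, if_neg hab]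
        simpa using h2
      · rw [if_neg hpa, if_neg hpa]
        rcases eq_or_ne pos b with rfl | hpb
        · rw [if_pos rfl, if_pos rfl]; simpa using h2
        · simp [hpb]
    rw [Finset.sum_congr rfl (fun pos _ => key pos), Finset.sum_add_distrib]
    rw [Finset.sum_ite_eq' Finset.univ a (fun _ => c/2),
        Finset.sum_ite_eq' Finset.univ b (fun _ => c/2)]
    simp


end Stmt4Aux

namespace Stmt4Aux

variable {n : ℕ} {ι : Type} [Fintype ι] [DecidableEq ι]

/-- index type for coordinates -/
abbrev Idx (n : ℕ) (ι : Type) : Type :=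
  (Finset (Fin (n+2)) × (ι → Fin (n+2))) ⊕ (ι → Fin (n+2))

noncomputable def ptfun (α : Finset (Fin (n+2)) → ℝ) (s : ℝ)
    (g : Finset (Fin (n+2)) → (ι → Fin (n+2))) (w : ι → Fin (n+2)) : Idx n ι → ℝ :=
  fun k => Sum.elim
    (fun Bp : Finset (Fin (n+2)) × (ι → Fin (n+2)) =>
      if Bp.2 = g Bp.1 then Real.sqrt (α Bp.1 / 2) else 0)
    (fun pos => if pos = w then Real.sqrt (s / 2) else 0) k

noncomputable def pt (α : Finset (Fin (n+2)) → ℝ) (s : ℝ)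
    (g : Finset (Fin (n+2)) → (ι → Fin (n+2))) (w : ι → Fin (n+2)) :
    EuclideanSpace ℝ (Fin (Fintype.card (Idx n ι))) :=
  WithLp.toLp 2 (fun k => ptfun α s g w ((Fintype.equivFin (Idx n ι)).symm k))

lemma dist_pt_sq (α : Finset (Fin (n+2)) → ℝ) (hα : ∀ B, 0 ≤ α B) {s : ℝ} (hs : 0 ≤ s)
    (g g' : Finset (Fin (n+2)) → (ι → Fin (n+2))) (w w' : ι → Fin (n+2)) :
    dist (pt α s g w) (pt α s g' w') ^ 2
      = (∑ B : Finset (Fin (n+2)), if g B = g' B then 0 else α B)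
        + (if w = w' then 0 else s) := by
  rw [EuclideanSpace.dist_eq, Real.sq_sqrt (by positivity)]
  have hre : ∀ h : Idx n ι → ℝ,
      ∑ k : Fin (Fintype.card (Idx n ι)), h ((Fintype.equivFin (Idx n ι)).symm k)
        = ∑ i : Idx n ι, h i := fun h => Equiv.sum_comp _ h
  calc ∑ k, dist (pt α s g w k) (pt α s g' w' k) ^ 2
      = ∑ i : Idx n ι, (ptfun α s g w i - ptfun α s g' w' i)^2 := by
        rw [← hre (fun i => (ptfun α s g w i - ptfun α s g' w' i)^2)]
        exact Finset.sum_congr rfl fun k _ => by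
          rw [Real.dist_eq, sq_abs]; rfl
    _ = _ := by
        rw [Fintype.sum_sum_type]
        congr 1
        · rw [Fintype.sum_prod_type]
          exact Finset.sum_congr rfl fun B _ => by
            simpa [ptfun] using pairsum (hα B) (g B) (g' B)
        · simpa [ptfun] using pairsum hs w w'

end Stmt4Aux

namespace Stmt4Aux

def rho {n : ℕ} (B : Finset (Fin (n+2))) (i : Fin (n+2)) : Fin (n+2) :=
  if h : i ∈ B then B.min' ⟨i, h⟩ else i

lemma rho_eq_of_mem {n : ℕ} {B : Finset (Fin (n+2))} {i j : Fin (n+2)}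
    (hi : i ∈ B) (hj : j ∈ B) : rho B i = rho B j := by
  simp [rho, hi, hj]

lemma rho_ne {n : ℕ} {B : Finset (Fin (n+2))} {i j : Fin (n+2)}
    (hij : i ≠ j) (h : ¬(i ∈ B ∧ j ∈ B)) : rho B i ≠ rho B j := by
  by_cases hi : i ∈ B
  · have hj : j ∉ B := fun hj => h ⟨hi, hj⟩
    rw [rho, dif_pos hi, rho, dif_neg hj]
    intro he
    exact hj (he ▸ B.min'_mem ⟨i, hi⟩)
  · rw [rho, dif_neg hi]
    by_cases hj : j ∈ B
    · rw [rho, dif_pos hj]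
      intro he
      exact hi (he ▸ B.min'_mem ⟨j, hj⟩)
    · rw [rho, dif_neg hj]; exact hij

end Stmt4Aux

lemma Stmt4Aux.eq_of_sq_eq_sq {a b : ℝ} (ha : 0 ≤ a) (hb : 0 ≤ b) (h : a^2 = b^2) : a = b := by
  have h2 : (a - b) * (a + b) = 0 := by ring_nf; linarith
  rcases mul_eq_zero.mp h2 with h3 | h3 <;> · first | linarith | nlinarith

/-- A finite set `A ⊆ ℝ^m` is diameter-Ramsey. -/
def IsDiamRamsey {m : ℕ} (A : Set (EuclideanSpace ℝ (Fin m))) : Prop :=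
  ∀ q : ℕ, 0 < q → ∃ (N : ℕ) (R : Set (EuclideanSpace ℝ (Fin N))), R.Finite ∧
    Metric.diam R = Metric.diam A ∧
    ∀ χ : EuclideanSpace ℝ (Fin N) → Fin q, ∃ S : Set (EuclideanSpace ℝ (Fin N)),
      S ⊆ R ∧ (∀ x ∈ S, ∀ y ∈ S, χ x = χ y) ∧
      ∃ f : EuclideanSpace ℝ (Fin N) → EuclideanSpace ℝ (Fin m),
        f '' S = A ∧ ∀ x ∈ S, ∀ y ∈ S, dist (f x) (f y) = dist x y

/-- the higher-order deficit criterion. Vertices are indexed by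
`Fin (n+2)` (so there are at least two), vertex `0` plays the role of `p₁` and
vertex `1` that of `p₂`; `𝓑` is the family of subsets of cardinality at least 2
not containing `{0,1}`. -/
theorem stmt4 {n N : ℕ} (p : Fin (n + 2) → EuclideanSpace ℝ (Fin N))
    (hind : AffineIndependent ℝ p)
    (D : ℝ) (hD : D = Metric.diam (Set.range p))
    (hD12 : dist (p 0) (p 1) = D)
    (α : Finset (Fin (n + 2)) → ℝ)
    (hα : ∀ B, 0 ≤ α B)
    (hsupp : ∀ B, ¬(2 ≤ B.card ∧ ¬ ({0, 1} : Finset (Fin (n + 2))) ⊆ B) → α B = 0)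
    (hdec : ∀ i j : Fin (n + 2), i ≠ j →
      D ^ 2 - dist (p i) (p j) ^ 2
        = ∑ B ∈ Finset.univ.filter (fun B : Finset (Fin (n + 2)) => i ∈ B ∧ j ∈ B), α B)
    (hmass : ∑ B : Finset (Fin (n + 2)), α B ≤ D ^ 2) :
    IsDiamRamsey (Set.range p) := by
  classical
  intro q hq
  have hDnn : 0 ≤ D := hD12 ▸ dist_nonneg
  set s : ℝ := D^2 - ∑ B : Finset (Fin (n+2)), α B with hsdef
  have hs : 0 ≤ s := by simp only [hsdef]; linarith
  obtain ⟨ι, ιfin, hHJ⟩ :=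
    Combinatorics.Line.exists_mono_in_high_dimension (Fin (n+2)) (Fin q)
  haveI : Fintype ι := ιfin
  haveI : DecidableEq ι := Classical.decEq ι
  -- ι is nonempty
  obtain ⟨l0, _⟩ := hHJ (fun _ => (⟨0, hq⟩ : Fin q))
  obtain ⟨k0, -⟩ := l0.proper
  -- the Ramsey set
  refine ⟨Fintype.card (Stmt4Aux.Idx n ι),
    Set.range (fun gw : (Finset (Fin (n+2)) → (ι → Fin (n+2))) × (ι → Fin (n+2)) =>
      Stmt4Aux.pt α s gw.1 gw.2), Set.finite_range _, ?_, ?_⟩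
  · -- diameter
    rw [← hD]
    apply le_antisymm
    · apply Metric.diam_le_of_forall_dist_le hDnn
      rintro x ⟨gw, rfl⟩ y ⟨gw', rfl⟩
      have hsq := Stmt4Aux.dist_pt_sq α hα hs gw.1 gw'.1 gw.2 gw'.2
      have h1 : (∑ B : Finset (Fin (n+2)), if gw.1 B = gw'.1 B then 0 else α B)
          ≤ ∑ B : Finset (Fin (n+2)), α B :=
        Finset.sum_le_sum fun B _ => by split_ifs with h; exacts [hα B, le_rfl]
      have h2 : (if gw.2 = gw'.2 then (0:ℝ) else s) ≤ s := by
        split_ifs; exacts [hs, le_rfl]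
      have hle : dist (Stmt4Aux.pt α s gw.1 gw.2) (Stmt4Aux.pt α s gw'.1 gw'.2) ^ 2
          ≤ D ^ 2 := by rw [hsq]; simp only [hsdef] at *; linarith
      nlinarith [dist_nonneg (x := Stmt4Aux.pt α s gw.1 gw.2)
        (y := Stmt4Aux.pt α s gw'.1 gw'.2)]
    · -- two points at distance exactly D
      set w0 : ι → Fin (n+2) := fun _ => 0
      set w1 : ι → Fin (n+2) := fun _ => 1
      have hw : w0 ≠ w1 := fun h => by
        have := congrFun h k0
        simp only [w0, w1] at this
        exact (Fin.zero_ne_one) this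
      have hsq := Stmt4Aux.dist_pt_sq α hα hs (fun _ => w0) (fun _ => w1) w0 w1
      rw [if_neg hw] at hsq
      have hsum : (∑ B : Finset (Fin (n+2)), if w0 = w1 then (0:ℝ) else α B)
          = ∑ B : Finset (Fin (n+2)), α B :=
        Finset.sum_congr rfl fun B _ => if_neg hw
      rw [hsum] at hsq
      have hsqD : dist (Stmt4Aux.pt α s (fun _ => w0) w0)
          (Stmt4Aux.pt α s (fun _ => w1) w1) ^ 2 = D ^ 2 := by
        rw [hsq]; simp only [hsdef]; ring
      have hdD : dist (Stmt4Aux.pt α s (fun _ => w0) w0)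
          (Stmt4Aux.pt α s (fun _ => w1) w1) = D :=
        Stmt4Aux.eq_of_sq_eq_sq dist_nonneg hDnn hsqD
      rw [← hdD]
      exact Metric.dist_le_diam_of_mem ((Set.finite_range _).isBounded)
        ⟨(fun _ => w0, w0), rfl⟩ ⟨(fun _ => w1, w1), rfl⟩
  · -- Ramsey property
    intro χ
    set C : (ι → Fin (n+2)) → Fin q :=
      fun w => χ (Stmt4Aux.pt α s (fun B => Stmt4Aux.rho B ∘ w) w) with hC
    obtain ⟨l, c, hc⟩ := hHJ C
    obtain ⟨k, hk⟩ := l.proper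
    set X : Fin (n+2) → EuclideanSpace ℝ (Fin (Fintype.card (Stmt4Aux.Idx n ι))) :=
      fun i => Stmt4Aux.pt α s (fun B => Stmt4Aux.rho B ∘ (l i)) (l i) with hXdef
    have hlk : ∀ i : Fin (n+2), (l i) k = i := fun i => l.apply_none i k hk
    have hword : ∀ i j : Fin (n+2), i ≠ j → (l i : ι → Fin (n+2)) ≠ (l j) := by
      intro i j hij h
      exact hij ((hlk i).symm.trans ((congrFun h k).trans (hlk j)))
    have hgiff : ∀ (i j : Fin (n+2)) (B : Finset (Fin (n+2))), i ≠ j →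
        ((Stmt4Aux.rho B ∘ (l i)) = (Stmt4Aux.rho B ∘ (l j)) ↔ (i ∈ B ∧ j ∈ B)) := by
      intro i j B hij
      constructor
      · intro h
        by_contra hmem
        have := congrFun h k
        simp only [Function.comp_apply, hlk] at this
        exact Stmt4Aux.rho_ne hij hmem this
      · rintro ⟨hi, hj⟩
        funext m
        simp only [Function.comp_apply]
        show Stmt4Aux.rho B ((l.idxFun m).getD i) = Stmt4Aux.rho B ((l.idxFun m).getD j)
        cases h' : l.idxFun m with
        | none => simpa using Stmt4Aux.rho_eq_of_mem hi hj
        | some a => simp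
    have hdistX : ∀ i j : Fin (n+2), i ≠ j → dist (X i) (X j) = dist (p i) (p j) := by
      intro i j hij
      have hsq := Stmt4Aux.dist_pt_sq α hα hs
        (fun B => Stmt4Aux.rho B ∘ (l i)) (fun B => Stmt4Aux.rho B ∘ (l j)) (l i) (l j)
      rw [if_neg (hword i j hij)] at hsq
      have h1 : (∑ B : Finset (Fin (n+2)),
          if (Stmt4Aux.rho B ∘ (l i)) = (Stmt4Aux.rho B ∘ (l j)) then 0 else α B)
          = ∑ B : Finset (Fin (n+2)), if (i ∈ B ∧ j ∈ B) then 0 else α B :=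
        Finset.sum_congr rfl fun B _ => if_congr (hgiff i j B hij) rfl rfl
      have h2 : (∑ B : Finset (Fin (n+2)), if (i ∈ B ∧ j ∈ B) then (0:ℝ) else α B)
          = (∑ B : Finset (Fin (n+2)), α B)
            - ∑ B ∈ Finset.univ.filter (fun B : Finset (Fin (n+2)) => i ∈ B ∧ j ∈ B), α B := by
        rw [Finset.sum_filter, ← Finset.sum_sub_distrib]
        exact Finset.sum_congr rfl fun B _ => by split_ifs <;> ring
      have hsq2 : dist (X i) (X j) ^ 2 = dist (p i) (p j) ^ 2 := by
        rw [hXdef]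
        simp only []
        rw [hsq, h1, h2, ← hdec i j hij]
        simp only [hsdef]; ring
      exact Stmt4Aux.eq_of_sq_eq_sq dist_nonneg dist_nonneg hsq2
    refine ⟨Set.range X, ?_, ?_, ?_⟩
    · rintro x ⟨i, rfl⟩
      exact ⟨(fun B => Stmt4Aux.rho B ∘ (l i), l i), rfl⟩
    · rintro x ⟨i, rfl⟩ y ⟨j, rfl⟩
      have hi : χ (X i) = c := hc i
      have hj : χ (X j) = c := hc j
      rw [hi, hj]
    · set f : EuclideanSpace ℝ (Fin (Fintype.card (Stmt4Aux.Idx n ι)))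
          → EuclideanSpace ℝ (Fin N) :=
        fun y => if h : ∃ i, X i = y then p h.choose else p 0 with hfdef
      have hfX : ∀ i, f (X i) = p i := by
        intro i
        have hex : ∃ i', X i' = X i := ⟨i, rfl⟩
        rw [hfdef]
        simp only [dif_pos hex]
        have hspec := hex.choose_spec
        by_cases hchoose : hex.choose = i
        · rw [hchoose]
        · exfalso
          have hd := hdistX _ _ hchoose
          rw [hspec, dist_self] at hd
          exact hind.injective.ne hchoose (dist_eq_zero.mp hd.symm)
      refine ⟨f, ?_, ?_⟩
      · rw [← Set.range_comp]
        exact congrArg Set.range (funext hfX)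
      · rintro x ⟨i, rfl⟩ y ⟨j, rfl⟩
        rcases eq_or_ne i j with rfl | hij
        · simp [hfX]
        · rw [hfX, hfX, hdistX i j hij]
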